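/- arXiv:2111.07732 — 2 statements merged into one kernel-verified Lean document; each statement's English description precedes it below -/
import Mathlib

section
/- For all natural numbers g and n with n ≥ 1 and 3·2^(n−1) ≤ g ≤ 3·2^n, there exists a finite simple graph T that is a tree (connected and acyclic) in which every vertex has degree 1 or degree 3, with exactly g vertices of degree 1 (leaves), and there exists a vertex O of T such that the graph distance from O to every leaf is at least n. -/
namespace Stmt4

inductive BT : Type
| lf : BT
| nd : BT → BT → BT

def BT.leaves : BT → ℕ
| .lf => 1
| .nd l r => l.leaves + r.leaves

def BT.depth : BT → ℕ
| .lf => 0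
| .nd l r => max l.depth r.depth + 1

def pos : BT → List Bool → Bool
| _, [] => true
| .lf, _ :: _ => false
| .nd l r, b :: s => pos (if b then l else r) s

def subAt : BT → List Bool → BT
| t, [] => t
| .lf, _ :: _ => .lf
| .nd l r, b :: s => subAt (if b then l else r) s

@[simp] lemma pos_nil (t : BT) : pos t [] = true := by cases t <;> rfl

@[simp] lemma subAt_nil (t : BT) : subAt t [] = t := by cases t <;> rfl

lemma pos_length_le : ∀ (t : BT) (s : List Bool), pos t s = true → s.length ≤ t.depth := by
  intro t
  induction t with
  | lf => intro s h; cases s with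
    | nil => simp
    | cons b s => simp [pos] at h
  | nd l r ihl ihr =>
    intro s h
    cases s with
    | nil => simp
    | cons b s =>
      simp only [pos] at h
      simp only [List.length_cons, BT.depth]
      cases b with
      | false => simpa using Nat.le_trans (ihr s (by simpa using h)) (Nat.le_max_right _ _)
      | true => simpa using Nat.le_trans (ihl s (by simpa using h)) (Nat.le_max_left _ _)

lemma pos_append : ∀ (t : BT) (s u : List Bool), pos t (s ++ u) = true → pos t s = true := by
  intro t s
  induction s generalizing t with
  | nil => intro u h; simp
  | cons b s ih =>
    intro u h
    cases t with
    | lf => simp [pos] at h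
    | nd l r =>
      simp only [List.cons_append, pos] at h ⊢
      exact ih _ u h

lemma pos_dropLast (t : BT) (s : List Bool) (h : pos t s = true) : pos t s.dropLast = true := by
  cases s with
  | nil => simp
  | cons b s' =>
    have : (b :: s') = (b :: s').dropLast ++ [(b :: s').getLast (by simp)] :=
      (List.dropLast_append_getLast (by simp)).symm
    rw [this] at h
    exact pos_append t _ _ h

lemma pos_snoc_iff (t : BT) (s : List Bool) (b : Bool) (h : pos t s = true) :
    pos t (s ++ [b]) = true ↔ subAt t s ≠ .lf := by
  induction s generalizing t with
  | nil =>
    cases t with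
    | lf => simp [pos, subAt]
    | nd l r => cases b <;> simp [pos, subAt]
  | cons c s ih =>
    cases t with
    | lf => simp [pos] at h
    | nd l r =>
      simp only [pos] at h
      simp only [List.cons_append, pos, subAt]
      exact ih _ h

def S (t : BT) : Set (List Bool) := {s | pos t s = true ∧ subAt t s = .lf}

lemma S_lf : S .lf = {([] : List Bool)} := by
  ext s
  cases s with
  | nil => simp [S, pos, subAt]
  | cons b s => simp [S, pos, subAt]

lemma S_nd (l r : BT) :
    S (.nd l r) = (List.cons true '' S l) ∪ (List.cons false '' S r) := by
  ext s
  cases s with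
  | nil =>
    simp [S, pos, subAt]
  | cons b s =>
    cases b <;> simp [S, pos, subAt, List.cons.injEq]

lemma S_finite (t : BT) : (S t).Finite := by
  induction t with
  | lf => rw [S_lf]; exact Set.finite_singleton _
  | nd l r ihl ihr =>
    rw [S_nd]
    exact (ihl.image _).union (ihr.image _)

lemma S_ncard (t : BT) : (S t).ncard = t.leaves := by
  induction t with
  | lf => rw [S_lf]; simp [BT.leaves]
  | nd l r ihl ihr =>
    rw [S_nd, BT.leaves]
    rw [Set.ncard_union_eq ?disj ((S_finite l).image _) ((S_finite r).image _)]
    · rw [Set.ncard_image_of_injective _ (fun a b => by simp),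
        Set.ncard_image_of_injective _ (fun a b => by simp), ihl, ihr]
    case disj =>
      rw [Set.disjoint_left]
      rintro x ⟨a, _, rfl⟩ ⟨c, _, hc⟩
      simp at hc

def full : ℕ → BT
| L => if L ≤ 1 then .lf else .nd (full ((L + 1) / 2)) (full (L / 2))
decreasing_by all_goals (simp_all; omega)

lemma leaves_full (L : ℕ) (h : 1 ≤ L) : (full L).leaves = L := by
  induction L using Nat.strong_induction_on with
  | _ L ih =>
    rw [full]
    by_cases h1 : L ≤ 1
    · interval_cases L
      · simp [h1, BT.leaves]
    · rw [if_neg h1, BT.leaves]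
      rw [ih ((L + 1) / 2) (by omega) (by omega), ih (L / 2) (by omega) (by omega)]
      omega

lemma depth_full (d : ℕ) : ∀ (L : ℕ), 2 ^ d ≤ L →
    ∀ s ∈ S (full L), d ≤ s.length := by
  induction d with
  | zero => intro L _ s _; exact Nat.zero_le _
  | succ d ih =>
    intro L hL s hs
    have h2 : 2 ≤ L := le_trans (by have := Nat.one_le_two_pow (n := d); omega) hL
    rw [S] at hs
    rw [full, if_neg (by omega)] at hs
    obtain ⟨hpos, hsub⟩ := hs
    cases s with
    | nil => simp [subAt] at hsub
    | cons b s' =>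
      simp only [pos, subAt] at hpos hsub
      have hpow : 2 ^ d ≤ L / 2 := by
        have := Nat.pow_succ 2 d
        omega
      have hpow' : 2 ^ d ≤ (L + 1) / 2 := le_trans hpow (by omega)
      cases b with
      | true =>
        have := ih ((L + 1) / 2) hpow' s' ⟨by simpa using hpos, by simpa using hsub⟩
        simpa using Nat.succ_le_succ this
      | false =>
        have := ih (L / 2) hpow s' ⟨by simpa using hpos, by simpa using hsub⟩
        simpa using Nat.succ_le_succ this

section Rooted

open SimpleGraph

variable {V : Type} (r : V) (f : V → V) (ht : V → ℕ)

def RG : SimpleGraph V where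
  Adj v w := v ≠ w ∧ ((v ≠ r ∧ f v = w) ∨ (w ≠ r ∧ f w = v))
  symm := by
    constructor
    rintro v w ⟨h1, h2⟩
    exact ⟨h1.symm, h2.symm⟩
  loopless := ⟨fun v hv => hv.1 rfl⟩

lemma RG_adj_height (H : ∀ v, v ≠ r → ht (f v) + 1 = ht v) {v w : V} (hvw : (RG r f).Adj v w) :
    ht w + 1 = ht v ∨ ht v + 1 = ht w := by
  rcases hvw.2 with ⟨hv, he⟩ | ⟨hw, he⟩
  · left; rw [← he]; exact H v hv
  · right; rw [← he]; exact H w hw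

lemma RG_adj_parent (H : ∀ v, v ≠ r → ht (f v) + 1 = ht v) {v w : V} (hvw : (RG r f).Adj v w) (hmax : ht w ≤ ht v) :
    v ≠ r ∧ f v = w := by
  rcases hvw.2 with h | ⟨hw, he⟩
  · exact h
  · exfalso
    have := H w hw
    rw [he] at this
    omega

lemma RG_reachable (H : ∀ v, v ≠ r → ht (f v) + 1 = ht v) (v : V) : (RG r f).Reachable v r := by
  suffices hgen : ∀ k v, ht v = k → (RG r f).Reachable v r from hgen (ht v) v rfl
  intro k
  induction k using Nat.strong_induction_on with
  | _ k ih =>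
    intro v hv
    by_cases hvr : v = r
    · subst hvr; exact Reachable.refl _
    · have hH := H v hvr
      have hadj : (RG r f).Adj v (f v) := by
        refine ⟨fun hh => ?_, Or.inl ⟨hvr, rfl⟩⟩
        rw [← hh] at hH; omega
      exact hadj.reachable.trans (ih (ht (f v)) (by omega) (f v) rfl)

lemma RG_connected (H : ∀ v, v ≠ r → ht (f v) + 1 = ht v) : (RG r f).Connected := by
  rw [connected_iff]
  exact ⟨fun u v => (RG_reachable r f ht H u).trans (RG_reachable r f ht H v).symm, ⟨r⟩⟩

lemma RG_walk_le (H : ∀ v, v ≠ r → ht (f v) + 1 = ht v) {u v : V} (p : (RG r f).Walk u v) : ht v ≤ ht u + p.length := by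
  induction p with
  | nil => simp
  | cons hadj q ih =>
    rcases RG_adj_height r f ht H hadj with h1 | h1 <;>
      simp only [Walk.length_cons] <;> omega

lemma RG_dist_ge (H : ∀ v, v ≠ r → ht (f v) + 1 = ht v) (hr : ht r = 0) (v : V) : ht v ≤ (RG r f).dist r v := by
  obtain ⟨p, hp⟩ := (RG_reachable r f ht H v).symm.exists_walk_length_eq_dist
  have := RG_walk_le r f ht H p
  omega

lemma RG_acyclic (H : ∀ v, v ≠ r → ht (f v) + 1 = ht v) : (RG r f).IsAcyclic := by
  classical
  intro v c hc
  obtain ⟨x, hxmem, hxmax⟩ : ∃ x ∈ c.support, ∀ y ∈ c.support, ht y ≤ ht x := by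
    obtain ⟨x, hx1, hx2⟩ := Finset.exists_max_image c.support.toFinset ht
      ⟨v, List.mem_toFinset.mpr c.start_mem_support⟩
    exact ⟨x, List.mem_toFinset.mp hx1, fun y hy => hx2 y (List.mem_toFinset.mpr hy)⟩
  have hc' := hc.rotate hxmem
  set c' := c.rotate x hxmem with hc'def
  have hsup : ∀ y ∈ c'.support, ht y ≤ ht x := by
    intro y hy
    rw [c'.support_eq_cons] at hy
    rcases List.mem_cons.mp hy with rfl | hy
    · exact le_refl _
    · exact hxmax y (List.mem_of_mem_tail
        (((Walk.support_rotate c x hxmem).mem_iff).mp hy))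
  cases hq0 : c' with
  | nil => exact hc'.ne_nil (by rw [hq0])
  | @cons _ y _ hadj q =>
    rw [hq0] at hc' hsup
    rw [Walk.cons_isCycle_iff] at hc'
    obtain ⟨hqpath, hxy⟩ := hc'
    have hymem : y ∈ q.support := q.start_mem_support
    have hy : ht y ≤ ht x := hsup y (by simp [Walk.support_cons, hymem])
    obtain ⟨hxr, hfx⟩ := RG_adj_parent r f ht H hadj hy
    have hxyne : x ≠ y := by
      have := H x hxr
      rw [hfx] at this
      intro hh; rw [hh] at this; omega
    obtain ⟨z, hxz, q', hq'⟩ := Walk.exists_eq_cons_of_ne hxyne q.reverse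
    have hzmem : z ∈ q.support := by
      have : z ∈ q.reverse.support := by
        rw [hq', Walk.support_cons]
        exact List.mem_cons_of_mem _ q'.start_mem_support
      rwa [Walk.support_reverse, List.mem_reverse] at this
    have hz : ht z ≤ ht x := hsup z (by simp [Walk.support_cons, hzmem])
    obtain ⟨-, hfz⟩ := RG_adj_parent r f ht H hxz hz
    have hzy : z = y := by rw [← hfz, hfx]
    apply hxy
    have : s(x, z) ∈ q.reverse.edges := by
      rw [hq', Walk.edges_cons]
      exact List.mem_cons_self
    rw [Walk.edges_reverse, List.mem_reverse] at this
    rwa [hzy] at this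

lemma RG_isTree (H : ∀ v, v ≠ r → ht (f v) + 1 = ht v) : (RG r f).IsTree :=
  ⟨RG_connected r f ht H, RG_acyclic r f ht H⟩

lemma RG_neighborSet (H : ∀ v, v ≠ r → ht (f v) + 1 = ht v) (v : V) : (RG r f).neighborSet v =
    {w | v ≠ r ∧ f v = w} ∪ {w | w ≠ r ∧ f w = v} := by
  ext w
  simp only [mem_neighborSet, Set.mem_union, Set.mem_setOf_eq]
  constructor
  · rintro ⟨_, h⟩; exact h
  · intro h
    refine ⟨?_, h⟩
    rcases h with ⟨hv, he⟩ | ⟨hw, he⟩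
    · have := H v hv; rw [he] at this; intro hh; rw [hh] at this; omega
    · have := H w hw; rw [he] at this; intro hh; rw [hh] at this; omega

end Rooted

section Main

open SimpleGraph

variable (t : Fin 3 → BT)

abbrev Vt : Type := Option ((i : Fin 3) × {s : List Bool // pos (t i) s = true})

def code : Vt t → Option (Fin 3 × List Bool) := fun v => v.map (fun p => (p.1, p.2.1))

lemma code_inj : Function.Injective (code t) := by
  rintro (_ | ⟨i, s, hs⟩) (_ | ⟨j, u, hu⟩) h <;> simp [code] at h ⊢
  obtain ⟨rfl, rfl⟩ := h
  exact ⟨rfl, HEq.rfl⟩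

def ft : Vt t → Vt t := fun v =>
  match v with
  | none => none
  | some ⟨i, ⟨s, hs⟩⟩ =>
    if h : s = [] then none
    else some ⟨i, ⟨s.dropLast, pos_dropLast _ _ hs⟩⟩

def htt : Vt t → ℕ := fun v =>
  match v with
  | none => 0
  | some ⟨_, ⟨s, _⟩⟩ => s.length + 1

lemma Ht : ∀ v : Vt t, v ≠ none → htt t (ft t v) + 1 = htt t v := by
  rintro (_ | ⟨i, s, hs⟩) hv
  · exact absurd rfl hv
  · by_cases h : s = []
    · subst h; simp [ft, htt]
    · have hlen : s.length ≠ 0 := by simpa using h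
      simp only [ft, htt, dif_neg h, List.length_dropLast]
      omega

lemma children_none_eq :
    {w : Vt t | w ≠ none ∧ ft t w = none} =
      Set.range (fun i : Fin 3 => (some ⟨i, ⟨[], pos_nil _⟩⟩ : Vt t)) := by
  ext w
  rcases w with _ | ⟨i, s, hs⟩
  · simp
  · simp only [Set.mem_setOf_eq, Set.mem_range, ne_eq, reduceCtorEq, not_false_iff, true_and]
    constructor
    · intro hf
      by_cases h : s = []
      · subst h; exact ⟨i, rfl⟩
      · simp [ft, dif_neg h] at hf
    · rintro ⟨j, hj⟩
      have := congrArg (code t) hj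
      simp only [code, Option.map_some] at this
      obtain ⟨rfl, rfl⟩ : j = i ∧ [] = s := by simpa using this
      simp [ft]

lemma children_some_lf (i : Fin 3) (s : List Bool) (hs : pos (t i) s = true)
    (hlf : subAt (t i) s = .lf) :
    {w : Vt t | w ≠ none ∧ ft t w = some ⟨i, ⟨s, hs⟩⟩} = ∅ := by
  ext w
  simp only [Set.mem_setOf_eq, Set.mem_empty_iff_false, iff_false, not_and]
  rcases w with _ | ⟨j, u, hu⟩
  · intro h; exact absurd rfl h
  · intro _ hf
    by_cases h : u = []
    · simp [ft, h] at hf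
    · rw [ft] at hf
      simp only [dif_neg h] at hf
      have := congrArg (code t) hf
      simp only [code, Option.map_some] at this
      obtain ⟨rfl, hdl⟩ : j = i ∧ u.dropLast = s := by simpa using this
      have hu' : pos (t j) (s ++ [u.getLast h]) = true := by
        rw [← hdl, List.dropLast_append_getLast h]; exact hu
      rw [(pos_snoc_iff _ _ _ hs)] at hu'
      exact hu' hlf

lemma children_some_nd (i : Fin 3) (s : List Bool) (hs : pos (t i) s = true)
    (hp1 : pos (t i) (s ++ [true]) = true) (hp2 : pos (t i) (s ++ [false]) = true) :
    {w : Vt t | w ≠ none ∧ ft t w = some ⟨i, ⟨s, hs⟩⟩} =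
      {some ⟨i, ⟨s ++ [true], hp1⟩⟩, some ⟨i, ⟨s ++ [false], hp2⟩⟩} := by
  ext w
  simp only [Set.mem_setOf_eq, Set.mem_insert_iff, Set.mem_singleton_iff]
  constructor
  · rintro ⟨hw, hf⟩
    rcases w with _ | ⟨j, u, hu⟩
    · exact absurd rfl hw
    · by_cases h : u = []
      · simp [ft, h] at hf
      · rw [ft] at hf
        simp only [dif_neg h] at hf
        have := congrArg (code t) hf
        simp only [code, Option.map_some] at this
        obtain ⟨rfl, hdl⟩ : j = i ∧ u.dropLast = s := by simpa using this
        obtain ⟨b, hbu⟩ : ∃ b, u = s ++ [b] :=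
          ⟨u.getLast h, by rw [← hdl, List.dropLast_append_getLast h]⟩
        subst hbu
        cases b with
        | true =>
          left
          apply code_inj
          simp [code]
        | false =>
          right
          apply code_inj
          simp [code]
  · rintro (rfl | rfl) <;>
    · refine ⟨by simp, ?_⟩
      rw [ft]
      rw [dif_neg (by simp)]
      apply code_inj
      simp [code, List.dropLast_concat]

lemma nbhd_none : (RG (none : Vt t) (ft t)).neighborSet none =
    Set.range (fun i : Fin 3 => (some ⟨i, ⟨[], pos_nil _⟩⟩ : Vt t)) := by
  rw [RG_neighborSet _ _ (htt t) (Ht t), ← children_none_eq]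
  simp

lemma deg_none : ((RG (none : Vt t) (ft t)).neighborSet none).ncard = 3 := by
  rw [nbhd_none]
  rw [← Nat.card_coe_set_eq, Nat.card_range_of_injective]
  · simp
  · intro a b hab
    have := congrArg (code t) hab
    simpa [code] using this

lemma nbhd_some (i : Fin 3) (s : List Bool) (hs : pos (t i) s = true) :
    (RG (none : Vt t) (ft t)).neighborSet (some ⟨i, ⟨s, hs⟩⟩) =
      insert (ft t (some ⟨i, ⟨s, hs⟩⟩))
        {w : Vt t | w ≠ none ∧ ft t w = some ⟨i, ⟨s, hs⟩⟩} := by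
  rw [RG_neighborSet _ _ (htt t) (Ht t)]
  rw [Set.insert_eq]
  congr 1
  ext w
  simp

lemma deg_some_lf (i : Fin 3) (s : List Bool) (hs : pos (t i) s = true)
    (hlf : subAt (t i) s = .lf) :
    ((RG (none : Vt t) (ft t)).neighborSet (some ⟨i, ⟨s, hs⟩⟩)).ncard = 1 := by
  rw [nbhd_some, children_some_lf t i s hs hlf]
  simp

lemma deg_some_nd (i : Fin 3) (s : List Bool) (hs : pos (t i) s = true)
    (hlf : subAt (t i) s ≠ .lf) :
    ((RG (none : Vt t) (ft t)).neighborSet (some ⟨i, ⟨s, hs⟩⟩)).ncard = 3 := by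
  have hp1 : pos (t i) (s ++ [true]) = true := (pos_snoc_iff _ _ _ hs).mpr hlf
  have hp2 : pos (t i) (s ++ [false]) = true := (pos_snoc_iff _ _ _ hs).mpr hlf
  rw [nbhd_some, children_some_nd t i s hs hp1 hp2]
  have hne : (some ⟨i, ⟨s ++ [true], hp1⟩⟩ : Vt t) ≠ some ⟨i, ⟨s ++ [false], hp2⟩⟩ := by
    intro hcon
    have := congrArg (code t) hcon
    simp [code] at this
  have hv : (some ⟨i, ⟨s, hs⟩⟩ : Vt t) ≠ none := by simp
  have hht := Ht t (some ⟨i, ⟨s, hs⟩⟩) hv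
  have hmem : ft t (some ⟨i, ⟨s, hs⟩⟩) ∉
      ({some ⟨i, ⟨s ++ [true], hp1⟩⟩, some ⟨i, ⟨s ++ [false], hp2⟩⟩} : Set (Vt t)) := by
    intro hcon
    simp only [Set.mem_insert_iff, Set.mem_singleton_iff] at hcon
    rcases hcon with hcon | hcon <;>
    · rw [hcon] at hht
      simp [htt] at hht
      omega
  rw [Set.ncard_insert_of_notMem hmem (Set.toFinite _), Set.ncard_pair hne]

lemma deg_eq_one_iff (v : Vt t) :
    ((RG (none : Vt t) (ft t)).neighborSet v).ncard = 1 ↔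
      ∃ p : (i : Fin 3) × {s : List Bool // pos (t i) s = true},
        v = some p ∧ subAt (t p.1) p.2.1 = .lf := by
  rcases v with _ | ⟨i, s, hs⟩
  · rw [deg_none]
    simp
  · by_cases hlf : subAt (t i) s = .lf
    · rw [deg_some_lf t i s hs hlf]
      simp only [true_iff]
      exact ⟨⟨i, ⟨s, hs⟩⟩, rfl, hlf⟩
    · rw [deg_some_nd t i s hs hlf]
      simp only [OfNat.ofNat_ne_one, false_iff, not_exists]
      rintro p ⟨hp, hplf⟩
      obtain rfl : p = ⟨i, ⟨s, hs⟩⟩ := (Option.some.inj hp).symm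
      exact hlf hplf

lemma deg_cases (v : Vt t) :
    ((RG (none : Vt t) (ft t)).neighborSet v).ncard = 1 ∨
      ((RG (none : Vt t) (ft t)).neighborSet v).ncard = 3 := by
  rcases v with _ | ⟨i, s, hs⟩
  · right; exact deg_none t
  · by_cases hlf : subAt (t i) s = .lf
    · left; exact deg_some_lf t i s hs hlf
    · right; exact deg_some_nd t i s hs hlf

def emb (i : Fin 3) : List Bool → Vt t := fun s =>
  if h : pos (t i) s = true then some ⟨i, ⟨s, h⟩⟩ else none

lemma leafset_eq :
    {v : Vt t | ((RG (none : Vt t) (ft t)).neighborSet v).ncard = 1} =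
      ⋃ i : Fin 3, (emb t i '' S (t i)) := by
  ext v
  simp only [Set.mem_setOf_eq, Set.mem_iUnion, Set.mem_image, deg_eq_one_iff]
  constructor
  · rintro ⟨⟨i, ⟨s, hs⟩⟩, rfl, hlf⟩
    refine ⟨i, s, ⟨hs, hlf⟩, ?_⟩
    simp [emb, dif_pos hs]
  · rintro ⟨i, s, ⟨hs, hlf⟩, rfl⟩
    refine ⟨⟨i, ⟨s, hs⟩⟩, ?_, hlf⟩
    simp [emb, dif_pos hs]

lemma emb_injOn (i : Fin 3) : Set.InjOn (emb t i) (S (t i)) := by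
  intro a ha b hb hab
  rw [emb, dif_pos ha.1] at hab
  rw [emb, dif_pos hb.1] at hab
  have := congrArg (code t) hab
  simpa [code] using this

lemma emb_image_ncard (i : Fin 3) : (emb t i '' S (t i)).ncard = (t i).leaves := by
  rw [Set.ncard_image_of_injOn (emb_injOn t i), S_ncard]

lemma emb_disjoint (i j : Fin 3) (hij : i ≠ j) :
    Disjoint (emb t i '' S (t i)) (emb t j '' S (t j)) := by
  rw [Set.disjoint_left]
  rintro x ⟨a, ha, rfl⟩ ⟨b, hb, hba⟩
  rw [emb, dif_pos hb.1] at hba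
  rw [emb, dif_pos ha.1] at hba
  have := congrArg (code t) hba
  simp only [code, Option.map_some] at this
  obtain ⟨hji, -⟩ : j = i ∧ b = a := by simpa using this
  exact hij hji.symm

lemma leafset_ncard :
    {v : Vt t | ((RG (none : Vt t) (ft t)).neighborSet v).ncard = 1}.ncard =
      (t 0).leaves + (t 1).leaves + (t 2).leaves := by
  rw [leafset_eq]
  have hU : (⋃ i : Fin 3, (emb t i '' S (t i))) =
      (emb t 0 '' S (t 0)) ∪ ((emb t 1 '' S (t 1)) ∪ (emb t 2 '' S (t 2))) := by
    ext x
    simp only [Set.mem_iUnion, Set.mem_union]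
    constructor
    · rintro ⟨i, hi⟩
      fin_cases i
      · exact Or.inl hi
      · exact Or.inr (Or.inl hi)
      · exact Or.inr (Or.inr hi)
    · rintro (h | h | h)
      exacts [⟨0, h⟩, ⟨1, h⟩, ⟨2, h⟩]
  rw [hU]
  have hf : ∀ i, (emb t i '' S (t i)).Finite := fun i => (S_finite (t i)).image _
  rw [Set.ncard_union_eq ?d1 (hf 0) ((hf 1).union (hf 2)),
    Set.ncard_union_eq (emb_disjoint t 1 2 (by decide)) (hf 1) (hf 2)]
  · rw [emb_image_ncard, emb_image_ncard, emb_image_ncard]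
    omega
  case d1 =>
    rw [Set.disjoint_union_right]
    exact ⟨emb_disjoint t 0 1 (by decide), emb_disjoint t 0 2 (by decide)⟩

lemma Vt_finite : Finite (Vt t) := by
  haveI : ∀ i : Fin 3, Finite {s : List Bool // pos (t i) s = true} := by
    intro i
    exact Set.Finite.to_subtype
      ((List.finite_length_le Bool (t i).depth).subset (fun s hs => pos_length_le _ _ hs))
  haveI : Finite ((i : Fin 3) × {s : List Bool // pos (t i) s = true}) := inferInstance
  exact Finite.of_equiv _ (Equiv.optionEquivSumPUnit.{0, 0} _).symm

end Main

end Stmt4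

theorem stmt_4 (g n : ℕ) (hn : 1 ≤ n) (hg1 : 3 * 2 ^ (n - 1) ≤ g) (hg2 : g ≤ 3 * 2 ^ n) :
    ∃ (V : Type) (_ : Finite V) (T : SimpleGraph V),
      T.IsTree
      ∧ (∀ v, (T.neighborSet v).ncard = 1 ∨ (T.neighborSet v).ncard = 3)
      ∧ {v | (T.neighborSet v).ncard = 1}.ncard = g
      ∧ ∃ O, ∀ v, (T.neighborSet v).ncard = 1 → n ≤ T.dist O v := by
  classical
  set m := 2 ^ (n - 1) with hm
  have hm1 : 1 ≤ m := Nat.one_le_two_pow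
  have h2n : 2 ^ n = 2 * m := by
    conv_lhs => rw [show n = (n - 1) + 1 by omega]
    rw [pow_succ, ← hm, Nat.mul_comm]
  rw [h2n] at hg2
  obtain ⟨L1, L2, L3, hsum, hL1, hL1', hL2, hL2', hL3, hL3'⟩ :
      ∃ a b c : ℕ, a + b + c = g ∧ m ≤ a ∧ a ≤ 2 * m ∧ m ≤ b ∧ b ≤ 2 * m ∧ m ≤ c ∧ c ≤ 2 * m :=
    ⟨min (g - 2 * m) (2 * m),
     min (g - min (g - 2 * m) (2 * m) - m) (2 * m),
     g - min (g - 2 * m) (2 * m) - min (g - min (g - 2 * m) (2 * m) - m) (2 * m),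
     by omega⟩
  set t : Fin 3 → Stmt4.BT := ![Stmt4.full L1, Stmt4.full L2, Stmt4.full L3] with htdef
  have ht0 : t 0 = Stmt4.full L1 := rfl
  have ht1 : t 1 = Stmt4.full L2 := rfl
  have ht2 : t 2 = Stmt4.full L3 := rfl
  refine ⟨Stmt4.Vt t, Stmt4.Vt_finite t, Stmt4.RG none (Stmt4.ft t), ?_, ?_, ?_, ?_⟩
  · exact Stmt4.RG_isTree _ _ (Stmt4.htt t) (Stmt4.Ht t)
  · exact Stmt4.deg_cases t
  · rw [Stmt4.leafset_ncard t, ht0, ht1, ht2,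
      Stmt4.leaves_full _ (by omega), Stmt4.leaves_full _ (by omega),
      Stmt4.leaves_full _ (by omega)]
    omega
  · refine ⟨none, ?_⟩
    intro v hv
    rw [Stmt4.deg_eq_one_iff] at hv
    obtain ⟨⟨i, ⟨s, hs⟩⟩, rfl, hlf⟩ := hv
    have hd : n - 1 ≤ s.length := by
      fin_cases i
      · exact Stmt4.depth_full (n - 1) L1 (by omega) s ⟨hs, hlf⟩
      · exact Stmt4.depth_full (n - 1) L2 (by omega) s ⟨hs, hlf⟩
      · exact Stmt4.depth_full (n - 1) L3 (by omega) s ⟨hs, hlf⟩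
    have hdist := Stmt4.RG_dist_ge none (Stmt4.ft t) (Stmt4.htt t) (Stmt4.Ht t) rfl
      (some ⟨i, ⟨s, hs⟩⟩)
    have hhv : Stmt4.htt t (some ⟨i, ⟨s, hs⟩⟩) = s.length + 1 := rfl
    rw [hhv] at hdist
    omega
end

section
/- For every natural number g ≥ 2, arccosh( cos(π/(2g+2)) / sin(π/(2g+2)) ) < log( (4g+4)/π ), where log is the natural logarithm and arccosh the inverse hyperbolic cosine. -/
/-- The inverse hyperbolic cosine, `arccosh x = log (x + √(x² - 1))` for `x ≥ 1`. -/
noncomputable def arccosh (x : ℝ) : ℝ := Real.log (x + Real.sqrt (x ^ 2 - 1))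

theorem stmt_9 (g : ℕ) (hg : 2 ≤ g) :
    arccosh (Real.cos (Real.pi / (2 * g + 2)) / Real.sin (Real.pi / (2 * g + 2)))
      < Real.log ((4 * g + 4) / Real.pi) := by
  have hπ := Real.pi_pos
  have hg2 : (2:ℝ) ≤ (g:ℝ) := by exact_mod_cast hg
  set t : ℝ := Real.pi / (2 * g + 2) with ht
  have hd : (0:ℝ) < 2 * g + 2 := by positivity
  have ht0 : 0 < t := div_pos hπ hd
  have ht2 : t < Real.pi / 2 := by
    rw [ht, div_lt_div_iff₀ hd two_pos]
    nlinarith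
  have hcos : 0 < Real.cos t := Real.cos_pos_of_mem_Ioo ⟨by linarith, ht2⟩
  have hsin : 0 < Real.sin t := Real.sin_pos_of_pos_of_lt_pi ht0 (by linarith)
  set x := Real.cos t / Real.sin t with hx
  have hx0 : 0 < x := div_pos hcos hsin
  have hlt : t < Real.tan t := Real.lt_tan ht0 ht2
  rw [Real.tan_eq_sin_div_cos, lt_div_iff₀ hcos] at hlt
  have hxlt : x < 1 / t := by
    rw [hx, div_lt_div_iff₀ hsin ht0]
    nlinarith
  have hsq : Real.sqrt (x ^ 2 - 1) < x := by
    rw [Real.sqrt_lt' hx0]; nlinarith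
  have hrhs : (4 * (g:ℝ) + 4) / Real.pi = 2 / t := by
    rw [ht]; field_simp; ring
  rw [arccosh, hrhs]
  apply Real.log_lt_log
  · positivity
  · have : (2:ℝ) / t = 2 * (1 / t) := by ring
    rw [this]
    nlinarith
end
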